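/- Let P be a commutative monoid with involution. Then the dihedral replete nerve N^direp P is isomorphic as a dihedral set to P × N^σ(P^gp), where N^σ denotes the real nerve: in simplicial degree q the isomorphism sends (x; g_0,...,g_q) ∈ (N^di P^gp ×_{P^gp} P)_q to (x, g_1 - g_0, ..., g_q - g_{q-1}) style coordinates, i.e., (x_0,...,x_q) with Σx_i = x corresponds to (x, x_1, x_1+x_2, ..., x_1+...+x_q) data. -/

import Mathlib

section DihedralNerve

variable {P : Type*} [AddCommMonoid P]

/-- Face maps of the dihedral nerve (cyclic for the last face). -/
def dFace (q : ℕ) (i : Fin (q + 2)) (x : Fin (q + 2) → P) : Fin (q + 1) → P :=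
  if (i : ℕ) = q + 1 then
    fun j => if (j : ℕ) = 0 then x (Fin.last (q + 1)) + x 0 else x j.castSucc
  else
    fun j =>
      if (j : ℕ) < (i : ℕ) then x j.castSucc
      else if (j : ℕ) = (i : ℕ) then x j.castSucc + x j.succ
      else x j.succ

/-- Degeneracy maps of the dihedral nerve (inserting the unit `0`). -/
def dDegen (q : ℕ) (i : Fin (q + 1)) (x : Fin (q + 1) → P) : Fin (q + 2) → P :=
  fun j =>
    if h : (j : ℕ) ≤ (i : ℕ) then x ⟨j, by have := i.isLt; omega⟩
    else if (j : ℕ) = (i : ℕ) + 1 then 0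
    else x ⟨(j : ℕ) - 1, by have := j.isLt; omega⟩

/-- Cyclic operator of the dihedral nerve. -/
def dCyc (q : ℕ) (x : Fin (q + 1) → P) : Fin (q + 1) → P := fun j => x (j - 1)

/-- Involution of the dihedral nerve: `(x₀, …, x_q) ↦ (w x₀, w x_q, …, w x₁)`. -/
def dInv (w : P → P) (q : ℕ) (x : Fin (q + 1) → P) : Fin (q + 1) → P :=
  fun j => w (x (-j))

end DihedralNerve

section Replete

variable {G : Type*} [AddCommGroup G]

/-- `q`-simplices of the dihedral replete nerve `N^direp P = N^di(P^gp) ×_{P^gp} P`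
of a monoid `P` realized as a submonoid of its group completion `G = P^gp`. -/
def RepN (P : AddSubmonoid G) (q : ℕ) : Set ((Fin (q + 1) → G) × G) :=
  {z | z.2 ∈ P ∧ ∑ j, z.1 j = z.2}

/-- Faces of the replete nerve. -/
def rFace (q : ℕ) (i : Fin (q + 2)) (z : (Fin (q + 2) → G) × G) :
    (Fin (q + 1) → G) × G := (dFace q i z.1, z.2)

/-- Degeneracies of the replete nerve. -/
def rDegen (q : ℕ) (i : Fin (q + 1)) (z : (Fin (q + 1) → G) × G) :
    (Fin (q + 2) → G) × G := (dDegen q i z.1, z.2)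

/-- Cyclic operator of the replete nerve. -/
def rCyc (q : ℕ) (z : (Fin (q + 1) → G) × G) : (Fin (q + 1) → G) × G :=
  (dCyc q z.1, z.2)

/-- Involution of the replete nerve. -/
def rInv (w : G → G) (q : ℕ) (z : (Fin (q + 1) → G) × G) : (Fin (q + 1) → G) × G :=
  (dInv w q z.1, w z.2)

/-! ### The target `P × N^σ(P^gp)`

A `q`-simplex of `P × N^σ(P^gp)` is encoded as a pair `(s, Y)` with `s ∈ P` and
`Y : Fin (q+1) → G`, `Y 0 = 0`: here `(Y 1, …, Y q)` are the partial sums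
`x₁, x₁ + x₂, …` of a bar-construction simplex `(x₁, …, x_q)` of `N^σ(P^gp)`.
The structure maps below are the dihedral structure maps of `P × N^σ(P^gp)`
in these coordinates. -/

/-- `q`-simplices of `P × N^σ(P^gp)` in partial-sum coordinates. -/
def TN (P : AddSubmonoid G) (q : ℕ) : Set (G × (Fin (q + 1) → G)) :=
  {z | z.1 ∈ P ∧ z.2 0 = 0}

/-- Faces of `P × N^σ(P^gp)`. -/
def tFace (q : ℕ) (i : Fin (q + 2)) (z : G × (Fin (q + 2) → G)) :
    G × (Fin (q + 1) → G) :=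
  (z.1, fun j =>
    if (i : ℕ) = 0 then z.2 j.succ - z.2 1
    else if (j : ℕ) < (i : ℕ) then z.2 j.castSucc
    else z.2 j.succ)

/-- Degeneracies of `P × N^σ(P^gp)`. -/
def tDegen (q : ℕ) (i : Fin (q + 1)) (z : G × (Fin (q + 1) → G)) :
    G × (Fin (q + 2) → G) :=
  (z.1, fun j =>
    if h : (j : ℕ) ≤ (i : ℕ) then z.2 ⟨j, by have := i.isLt; omega⟩
    else z.2 ⟨(j : ℕ) - 1, by have := j.isLt; omega⟩)

/-- Cyclic operator of `P × N^σ(P^gp)`. -/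
def tCyc (q : ℕ) (z : G × (Fin (q + 1) → G)) : G × (Fin (q + 1) → G) :=
  (z.1, fun j =>
    if h : (j : ℕ) = 0 then 0
    else z.1 - z.2 (Fin.last q) + z.2 ⟨(j : ℕ) - 1, by have := j.isLt; omega⟩)

/-- Involution of `P × N^σ(P^gp)` (the real structure of the real nerve). -/
def tInv (w : G → G) (q : ℕ) (z : G × (Fin (q + 1) → G)) : G × (Fin (q + 1) → G) :=
  (w z.1, fun j => w (z.2 (Fin.last q) - z.2 (Fin.last q - j)))

end Replete



section Aux
set_option linter.unusedSectionVars false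
variable {G : Type*} [AddCommGroup G] {m : ℕ}

def Fsum (X : Fin (m+1) → G) (n : ℕ) : G :=
  ∑ i ∈ Finset.univ.filter (fun i : Fin (m + 1) => 0 < (i : ℕ) ∧ (i : ℕ) ≤ n), X i

lemma Fsum_zero (X : Fin (m+1) → G) : Fsum X 0 = 0 := by
  rw [Fsum, Finset.filter_false_of_mem (fun i _ => by omega), Finset.sum_empty]

lemma Fsum_succ (X : Fin (m+1) → G) {n : ℕ} (h : n < m) :
    Fsum X (n+1) = Fsum X n + X ⟨n+1, by omega⟩ := by
  rw [Fsum, Fsum]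
  have h2 : (Finset.univ.filter fun i : Fin (m+1) => 0 < (i:ℕ) ∧ (i:ℕ) ≤ n+1)
      = insert ⟨n+1, by omega⟩
        (Finset.univ.filter fun i : Fin (m+1) => 0 < (i:ℕ) ∧ (i:ℕ) ≤ n) := by
    ext i
    simp only [Finset.mem_filter, Finset.mem_univ, true_and, Finset.mem_insert, Fin.ext_iff,
      Fin.val_mk]
    omega
  rw [h2, Finset.sum_insert (by simp)]
  exact add_comm _ _

lemma Fsum_stable (X : Fin (m+1) → G) {n : ℕ} (h : m ≤ n) : Fsum X n = Fsum X m := by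
  rw [Fsum, Fsum]
  congr 1
  ext i
  simp only [Finset.mem_filter, Finset.mem_univ, true_and]
  have := i.isLt
  omega

lemma sum_eq_Fsum (X : Fin (m+1) → G) : ∑ j, X j = X 0 + Fsum X m := by
  rw [Fsum]
  have h2 : (Finset.univ.filter fun i : Fin (m+1) => 0 < (i:ℕ) ∧ (i:ℕ) ≤ m)
      = Finset.univ.erase 0 := by
    ext i
    simp only [Finset.mem_filter, Finset.mem_univ, true_and, Finset.mem_erase, Fin.ext_iff,
      ne_eq, Fin.val_zero, and_true]
    have := i.isLt
    omega
  rw [h2]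
  exact (Finset.add_sum_erase _ _ (Finset.mem_univ 0)).symm

lemma Fsum_congr (X : Fin (m+1) → G) {a b : ℕ} (h : a = b) : Fsum X a = Fsum X b := by
  rw [h]

lemma Fval (X : Fin (m+1) → G) {a b : ℕ} (ha : a < m+1) (hb : b < m+1) (h : a = b) :
    X ⟨a, ha⟩ = X ⟨b, hb⟩ := by
  subst h; rfl

lemma Fsum_dFace_zero (X : Fin (m+2) → G) :
    ∀ n, n ≤ m → Fsum (dFace m 0 X) n = Fsum X (n+1) - X 1 := by
  intro n
  induction n with
  | zero =>
    intro _
    have h1 : (⟨0+1, by omega⟩ : Fin (m+2)) = 1 := by ext; simp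
    rw [Fsum_zero, Fsum_succ X (by omega), Fsum_zero, h1]
    abel
  | succ n ih =>
    intro hn
    rw [Fsum_succ _ (show n < m by omega)]
    have hv : dFace m 0 X ⟨n+1, by omega⟩ = X ⟨n+1+1, by omega⟩ := by
      rw [dFace, if_neg (by simp)]
      simp only [Fin.val_zero, Fin.val_mk, Fin.succ_mk, Fin.castSucc_mk]
      simp
    rw [hv, ih (by omega), Fsum_succ X (show n+1 < m+1 by omega)]
    abel

lemma Fsum_dFace_mid (X : Fin (m+2) → G) (i : Fin (m+2)) (hi0 : 0 < (i:ℕ))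
    (him : (i:ℕ) < m+1) :
    ∀ n, n ≤ m → Fsum (dFace m i X) n
      = if n < (i:ℕ) then Fsum X n else Fsum X (n+1) := by
  intro n
  induction n with
  | zero =>
    intro _
    rw [if_pos hi0, Fsum_zero, Fsum_zero]
  | succ n ih =>
    intro hn
    rw [Fsum_succ _ (show n < m by omega)]
    rcases lt_trichotomy (n+1) (i:ℕ) with h | h | h
    · have hv : dFace m i X ⟨n+1, by omega⟩ = X ⟨n+1, by omega⟩ := by
        rw [dFace, if_neg (by omega)]
        simp only [Fin.val_mk, Fin.succ_mk, Fin.castSucc_mk]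
        rw [if_pos h]
      rw [hv, ih (by omega), if_pos (by omega), if_pos h,
        Fsum_succ X (show n < m+1 by omega)]
    · have hv : dFace m i X ⟨n+1, by omega⟩ = X ⟨n+1, by omega⟩ + X ⟨n+1+1, by omega⟩ := by
        rw [dFace, if_neg (by omega)]
        simp only [Fin.val_mk, Fin.succ_mk, Fin.castSucc_mk]
        rw [if_neg (by omega), if_pos h]
      rw [hv, ih (by omega), if_pos (by omega), if_neg (by omega),
        Fsum_succ X (show n+1 < m+1 by omega), Fsum_succ X (show n < m+1 by omega)]
      abel
    · have hv : dFace m i X ⟨n+1, by omega⟩ = X ⟨n+1+1, by omega⟩ := by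
        rw [dFace, if_neg (by omega)]
        simp only [Fin.val_mk, Fin.succ_mk, Fin.castSucc_mk]
        rw [if_neg (by omega), if_neg (by omega)]
      rw [hv, ih (by omega), if_neg (by omega), if_neg (by omega),
        Fsum_succ X (show n+1 < m+1 by omega)]

lemma Fsum_dFace_last (X : Fin (m+2) → G) (i : Fin (m+2)) (him : (i:ℕ) = m+1) :
    ∀ n, n ≤ m → Fsum (dFace m i X) n = Fsum X n := by
  intro n
  induction n with
  | zero => intro _; rw [Fsum_zero, Fsum_zero]
  | succ n ih =>
    intro hn
    rw [Fsum_succ _ (show n < m by omega)]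
    have hv : dFace m i X ⟨n+1, by omega⟩ = X ⟨n+1, by omega⟩ := by
      rw [dFace, if_pos him]
      simp only [Fin.val_mk, Fin.castSucc_mk]
      rw [if_neg (by omega)]
    rw [hv, ih (by omega), Fsum_succ X (show n < m+1 by omega)]

lemma Fsum_dDegen (X : Fin (m+1) → G) (i : Fin (m+1)) :
    ∀ n, n ≤ m+1 → Fsum (dDegen m i X) n
      = if n ≤ (i:ℕ) then Fsum X n else Fsum X (n-1) := by
  intro n
  induction n with
  | zero => intro _; rw [if_pos (by omega), Fsum_zero, Fsum_zero]
  | succ n ih =>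
    intro hn
    rw [Fsum_succ _ (show n < m+1 by omega)]
    rcases lt_trichotomy (n+1) ((i:ℕ)+1) with h | h | h
    · have hv : dDegen m i X ⟨n+1, by omega⟩ = X ⟨n+1, by omega⟩ := by
        rw [dDegen]
        simp only [Fin.val_mk]
        rw [dif_pos (by omega)]
      rw [hv, ih (by omega), if_pos (by omega), if_pos (by omega),
        Fsum_succ X (show n < m by have := i.isLt; omega)]
    · have hv : dDegen m i X ⟨n+1, by omega⟩ = 0 := by
        rw [dDegen]
        simp only [Fin.val_mk]
        rw [dif_neg (by omega), if_pos (by omega)]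
      rw [hv, ih (by omega), if_pos (by omega), if_neg (by omega)]
      simp
    · have hv : dDegen m i X ⟨n+1, by omega⟩ = X ⟨n, by omega⟩ := by
        rw [dDegen]
        simp only [Fin.val_mk]
        rw [dif_neg (by omega), if_neg (by omega)]
        exact Fval X _ _ (by omega)
      rw [hv, ih (by omega), if_neg (by omega), if_neg (by omega),
        Fsum_congr X (show n+1-1 = (n-1)+1 by omega),
        Fsum_succ X (show n-1 < m by omega)]
      congr 1
      exact Fval X _ _ (by omega)

lemma sub_one_mk (k : ℕ) (h : k + 1 < m + 1) :
    (⟨k+1, h⟩ : Fin (m+1)) - 1 = ⟨k, by omega⟩ := by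
  ext
  rw [Fin.sub_def]
  simp only [Fin.val_mk, Fin.val_one']
  rw [Nat.mod_eq_of_lt (show 1 < m+1 by omega),
    show m+1-1 + (k+1) = (m+1) + k by omega, Nat.add_mod_left,
    Nat.mod_eq_of_lt (by omega)]

lemma neg_mk (n : ℕ) (h : n + 1 < m + 1) :
    -(⟨n+1, h⟩ : Fin (m+1)) = ⟨m - n, by omega⟩ := by
  ext
  rw [Fin.neg_def]
  simp only [Fin.val_mk]
  rw [show m+1 - (n+1) = m - n by omega, Nat.mod_eq_of_lt (by omega)]

lemma last_sub_val (j : Fin (m+1)) : ((Fin.last m - j : Fin (m+1)) : ℕ) = m - (j:ℕ) := by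
  rw [Fin.sub_def]
  simp only [Fin.val_last]
  rcases Nat.eq_zero_or_pos (j : ℕ) with h | h
  · rw [h, show m+1-0 + m = m + (m+1) by omega, Nat.add_mod_right,
      Nat.mod_eq_of_lt (by omega)]
    omega
  · have := j.isLt
    rw [show m+1-(j:ℕ) + m = (m+1) + (m - (j:ℕ)) by omega, Nat.add_mod_left,
      Nat.mod_eq_of_lt (by omega)]

lemma dCyc_apply (X : Fin (m+1) → G) (k : ℕ) (h : k+1 < m+1) :
    dCyc m X ⟨k+1, h⟩ = X ⟨k, by omega⟩ := by
  show X ((⟨k+1, h⟩ : Fin (m+1)) - 1) = _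
  rw [sub_one_mk k h]

lemma Fsum_dCyc (X : Fin (m+1) → G) :
    ∀ n, 0 < n → n ≤ m → Fsum (dCyc m X) n = X 0 + Fsum X (n-1) := by
  intro n
  induction n with
  | zero => intro h; exact absurd h (lt_irrefl 0)
  | succ n ih =>
    intro _ hn
    rw [Fsum_succ _ (show n < m by omega), dCyc_apply X n (by omega)]
    rcases Nat.eq_zero_or_pos n with h0 | hpos
    · subst h0
      rw [Fsum_zero, Fsum_congr X (show 0+1-1 = 0 by omega), Fsum_zero, zero_add, add_zero]
      congr 1
    · rw [ih hpos (by omega),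
        Fsum_congr X (show n+1-1 = (n-1)+1 by omega), Fsum_succ X (show n-1 < m by omega),
        ← add_assoc]
      congr 1
      exact (Fval X _ _ (by omega)).symm

lemma Fsum_dInv (w : G →+ G) (X : Fin (m+1) → G) :
    ∀ n, n ≤ m → Fsum (dInv (⇑w) m X) n = w (Fsum X m - Fsum X (m-n)) := by
  intro n
  induction n with
  | zero =>
    intro _
    rw [Fsum_zero, Fsum_congr X (show m-0 = m by omega), sub_self, map_zero]
  | succ n ih =>
    intro hn
    rw [Fsum_succ _ (show n < m by omega), ih (by omega)]
    have hval : dInv (⇑w) m X ⟨n+1, by omega⟩ = w (X ⟨m-n, by omega⟩) := by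
      show w (X (-(⟨n+1, _⟩ : Fin (m+1)))) = _
      rw [neg_mk n (by omega)]
    rw [hval, ← map_add w]
    congr 1
    rw [Fsum_congr X (show m-n = (m-(n+1))+1 by omega),
      Fsum_succ X (show m-(n+1) < m by omega),
      Fval X (by omega) (show m-n < m+1 by omega) (show m-(n+1)+1 = m-n by omega)]
    abel

end Aux

/-- For a commutative monoid `P` with involution (realized as a submonoid
of its group completion `G = P^gp`, with extended involution `w`), the dihedral replete
nerve `N^direp P` is isomorphic as a dihedral set to `P × N^σ(P^gp)`: the degreewise map
`((x₀, …, x_q), s) ↦ (s, (0, x₁, x₁ + x₂, …, x₁ + ⋯ + x_q))` is a bijection of the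
replete simplices onto the simplices of `P × N^σ(P^gp)` commuting with all faces,
degeneracies, the cyclic operators and the involutions. -/
theorem stmt11 {G : Type*} [AddCommGroup G] (P : AddSubmonoid G)
    (hgen : ∀ g : G, ∃ a ∈ P, ∃ b ∈ P, g = a - b)
    (w : G →+ G) (hw : ∀ g, w (w g) = g) (hwP : ∀ a ∈ P, w a ∈ P) :
    let Ψ : ∀ q : ℕ, ((Fin (q + 1) → G) × G) → (G × (Fin (q + 1) → G)) :=
      fun q z => (z.2, fun j =>
        ∑ i ∈ Finset.univ.filter (fun i : Fin (q + 1) => 0 < (i : ℕ) ∧ (i : ℕ) ≤ (j : ℕ)),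
          z.1 i)
    -- Ψ is a degreewise bijection …
    (∀ q, Set.BijOn (Ψ q) (RepN P q) (TN P q)) ∧
    -- … the target structure maps preserve the target simplices …
    (∀ (q : ℕ) (i : Fin (q + 2)) z, z ∈ TN P (q + 1) → tFace q i z ∈ TN P q) ∧
    (∀ (q : ℕ) (i : Fin (q + 1)) z, z ∈ TN P q → tDegen q i z ∈ TN P (q + 1)) ∧
    (∀ (q : ℕ) z, z ∈ TN P q → tCyc q z ∈ TN P q) ∧
    (∀ (q : ℕ) z, z ∈ TN P q → tInv (⇑w) q z ∈ TN P q) ∧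
    -- … and Ψ commutes with all the dihedral structure maps
    (∀ (q : ℕ) (i : Fin (q + 2)) z, z ∈ RepN P (q + 1) →
      Ψ q (rFace q i z) = tFace q i (Ψ (q + 1) z)) ∧
    (∀ (q : ℕ) (i : Fin (q + 1)) z, z ∈ RepN P q →
      Ψ (q + 1) (rDegen q i z) = tDegen q i (Ψ q z)) ∧
    (∀ (q : ℕ) z, z ∈ RepN P q → Ψ q (rCyc q z) = tCyc q (Ψ q z)) ∧
    (∀ (q : ℕ) z, z ∈ RepN P q → Ψ q (rInv (⇑w) q z) = tInv (⇑w) q (Ψ q z)) := by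
  intro Ψ
  have hΨ2 : ∀ (q : ℕ) (z : (Fin (q+1) → G) × G) (j : Fin (q+1)),
      (Ψ q z).2 j = Fsum z.1 (j:ℕ) := fun _ _ _ => rfl
  refine ⟨?_, ?_, ?_, ?_, ?_, ?_, ?_, ?_, ?_⟩
  · -- BijOn
    intro q
    refine ⟨?_, ?_, ?_⟩
    · -- MapsTo
      intro z hz
      refine ⟨hz.1, ?_⟩
      show Fsum z.1 (((0 : Fin (q+1)) : ℕ)) = 0
      rw [Fsum_congr z.1 (show ((0 : Fin (q+1)) : ℕ) = 0 by simp), Fsum_zero]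
    · -- InjOn
      intro z hz z' hz' h
      have h1 : z.2 = z'.2 := congrArg Prod.fst h
      have h3 : ∀ n : ℕ, n ≤ q → Fsum z.1 n = Fsum z'.1 n := by
        intro n hn
        have h2 := congrFun (congrArg Prod.snd h) ⟨n, by omega⟩
        rw [hΨ2, hΨ2] at h2
        simpa using h2
      have h4 : z.1 = z'.1 := by
        funext j
        rcases Nat.eq_zero_or_pos (j:ℕ) with h0 | hpos
        · have ej : j = 0 := by ext; simp [h0]
          rw [ej]
          have e1 : z.1 0 = z.2 - Fsum z.1 q := by
            rw [← hz.2, sum_eq_Fsum z.1]; abel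
          have e2 : z'.1 0 = z'.2 - Fsum z'.1 q := by
            rw [← hz'.2, sum_eq_Fsum z'.1]; abel
          rw [e1, e2, h1, h3 q le_rfl]
        · obtain ⟨n, hn⟩ : ∃ n, (j:ℕ) = n+1 := ⟨(j:ℕ)-1, by omega⟩
          have hj : j = ⟨n+1, by have := j.isLt; omega⟩ := by ext; simp [hn]
          have e1 : z.1 j = Fsum z.1 (n+1) - Fsum z.1 n := by
            rw [hj, Fsum_succ z.1 (show n < q by have := j.isLt; omega)]; abel
          have e2 : z'.1 j = Fsum z'.1 (n+1) - Fsum z'.1 n := by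
            rw [hj, Fsum_succ z'.1 (show n < q by have := j.isLt; omega)]; abel
          rw [e1, e2, h3 (n+1) (by have := j.isLt; omega), h3 n (by have := j.isLt; omega)]
      exact Prod.ext h4 h1
    · -- SurjOn
      intro y hy
      obtain ⟨hyP, hy0⟩ := hy
      set X : Fin (q+1) → G := fun j =>
        if (j:ℕ) = 0 then y.1 - y.2 (Fin.last q)
        else y.2 j - y.2 ⟨(j:ℕ)-1, by have := j.isLt; omega⟩ with hX
      have key : ∀ n, (hn : n ≤ q) → Fsum X n = y.2 ⟨n, by omega⟩ := by
        intro n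
        induction n with
        | zero =>
          intro _
          rw [Fsum_zero]
          have e0 : (⟨0, by omega⟩ : Fin (q+1)) = 0 := by ext; simp
          rw [e0, hy0]
        | succ n ih =>
          intro hn
          rw [Fsum_succ X (by omega), ih (by omega)]
          have hXv : X ⟨n+1, by omega⟩ = y.2 ⟨n+1, by omega⟩ - y.2 ⟨n, by omega⟩ := by
            rw [hX]
            simp only [Fin.val_mk]
            rw [if_neg (by omega)]
            congr 1
          rw [hXv]
          abel
      refine ⟨(X, y.1), ⟨hyP, ?_⟩, ?_⟩
      · rw [sum_eq_Fsum X, key q le_rfl]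
        have hX0 : X 0 = y.1 - y.2 (Fin.last q) := by rw [hX]; simp
        rw [hX0]
        have eL : (⟨q, by omega⟩ : Fin (q+1)) = Fin.last q := rfl
        rw [eL]
        abel
      · refine Prod.ext rfl ?_
        funext j
        show Fsum X (j:ℕ) = y.2 j
        rw [key (j:ℕ) (by have := j.isLt; omega)]
  · -- tFace preserves TN
    intro q i z hz
    refine ⟨hz.1, ?_⟩
    by_cases hi : (i:ℕ) = 0
    · simp [tFace, hi, Fin.succ_zero_eq_one]
    · simpa [tFace, hi, Nat.pos_of_ne_zero hi, Fin.castSucc_zero] using hz.2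
  · -- tDegen preserves TN
    intro q i z hz
    exact ⟨hz.1, by simpa [tDegen] using hz.2⟩
  · -- tCyc preserves TN
    intro q z hz
    exact ⟨hz.1, by simp [tCyc]⟩
  · -- tInv preserves TN
    intro q z hz
    exact ⟨hwP _ hz.1, by simp [tInv]⟩
  · -- faces commute
    intro q i z hz
    refine Prod.ext rfl ?_
    funext j
    show Fsum (dFace q i z.1) (j:ℕ) = (tFace q i (Ψ (q+1) z)).2 j
    have hR : (tFace q i (Ψ (q+1) z)).2 j
        = if (i:ℕ) = 0 then Fsum z.1 ((j:ℕ)+1) - Fsum z.1 1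
          else if (j:ℕ) < (i:ℕ) then Fsum z.1 (j:ℕ) else Fsum z.1 ((j:ℕ)+1) := by
      simp only [tFace, hΨ2, Fin.val_succ, Fin.coe_castSucc, Fin.val_one]
    rw [hR]
    by_cases hi0 : (i:ℕ) = 0
    · have hieq : i = 0 := by ext; simpa using hi0
      subst hieq
      rw [if_pos hi0, Fsum_dFace_zero z.1 (j:ℕ) (by have := j.isLt; omega)]
      have e : Fsum z.1 1 = z.1 1 := by
        rw [Fsum_congr z.1 (show (1:ℕ) = 0+1 by omega),
          Fsum_succ z.1 (show 0 < q+1 by omega), Fsum_zero, zero_add]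
        exact congrArg z.1 (by ext; simp)
      rw [e]
    · by_cases hil : (i:ℕ) = q+1
      · rw [if_neg hi0, Fsum_dFace_last z.1 i hil (j:ℕ) (by have := j.isLt; omega),
          if_pos (by have := j.isLt; omega)]
      · rw [if_neg hi0,
          Fsum_dFace_mid z.1 i (by omega) (by have := i.isLt; omega) (j:ℕ)
            (by have := j.isLt; omega)]
  · -- degeneracies commute
    intro q i z hz
    refine Prod.ext rfl ?_
    funext j
    show Fsum (dDegen q i z.1) (j:ℕ) = (tDegen q i (Ψ q z)).2 j
    rw [Fsum_dDegen z.1 i (j:ℕ) (by have := j.isLt; omega)]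
    simp only [tDegen, hΨ2, Fin.val_mk]
    split_ifs with h
    · rfl
    · rfl
  · -- cyclic operators commute
    intro q z hz
    refine Prod.ext rfl ?_
    funext j
    show Fsum (dCyc q z.1) (j:ℕ) = (tCyc q (Ψ q z)).2 j
    by_cases hj : (j:ℕ) = 0
    · simp only [tCyc]
      rw [dif_pos hj, Fsum_congr _ hj, Fsum_zero]
    · rw [Fsum_dCyc z.1 (j:ℕ) (by omega) (by have := j.isLt; omega)]
      simp only [tCyc]
      rw [dif_neg hj]
      show z.1 0 + Fsum z.1 ((j:ℕ)-1) = z.2 - Fsum z.1 q + Fsum z.1 ((j:ℕ)-1)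
      congr 1
      rw [← hz.2, sum_eq_Fsum z.1]
      abel
  · -- involutions commute
    intro q z hz
    refine Prod.ext rfl ?_
    funext j
    show Fsum (dInv (⇑w) q z.1) (j:ℕ) = (tInv (⇑w) q (Ψ q z)).2 j
    rw [Fsum_dInv w z.1 (j:ℕ) (by have := j.isLt; omega)]
    simp only [tInv, Fin.val_last, last_sub_val]
    rw [hΨ2, hΨ2, Fin.val_last, last_sub_val]
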